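/- arXiv:2204.12327 — 2 statements merged into one kernel-verified Lean document; each statement's English description precedes it below -/
import Mathlib

section
/- Let q : ℝ → ℂ be twice continuously differentiable with |q''(t)| ≤ C·(1+|t|)^{-1} for all t ∈ ℝ. Define h(μ) = (1/2)∫_{-1}^{1} (1-λ²)^{-1/2} λ q'(λμ) dλ for μ > 0. Then there is a constant C' (depending only on C) such that (1+μ)·|h'(μ)| ≤ C' for all μ > 0. -/
open Real intervalIntegral MeasureTheory Metric Set

noncomputable def Wfn (lam : ℝ) : ℝ := (1 - lam ^ 2 : ℝ) ^ (-(1/2) : ℝ)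

lemma Wfn_meas : Measurable Wfn := by unfold Wfn; fun_prop

lemma Wfn_nonneg {t : ℝ} (ht : t ∈ Icc (-1:ℝ) 1) : 0 ≤ Wfn t := by
  have : (0:ℝ) ≤ 1 - t^2 := by nlinarith [ht.1, ht.2]
  exact Real.rpow_nonneg this _

lemma Wfn_int : IntervalIntegrable Wfn volume (-1) 1 := by
  have h1 : IntervalIntegrable (fun x : ℝ => (1 - x) ^ (-(1/2):ℝ)) volume 0 1 := by
    have := (intervalIntegrable_rpow' (a := 1) (b := 0) (r := -(1/2))
      (by norm_num)).comp_sub_left 1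
    simpa using this
  have h2 : IntervalIntegrable (fun x : ℝ => (1 + x) ^ (-(1/2):ℝ)) volume (-1) 0 := by
    have := (intervalIntegrable_rpow' (a := 0) (b := 1) (r := -(1/2))
      (by norm_num)).comp_add_right 1
    simpa [add_comm] using this
  have m : AEStronglyMeasurable Wfn (volume.restrict (Set.uIoc (0:ℝ) 1)) :=
    Wfn_meas.aestronglyMeasurable
  have m2 : AEStronglyMeasurable Wfn (volume.restrict (Set.uIoc (-1:ℝ) 0)) :=
    Wfn_meas.aestronglyMeasurable
  have hA : IntervalIntegrable Wfn volume 0 1 := by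
    refine h1.mono_fun' m ?_
    rw [Filter.EventuallyLE, ae_restrict_iff' measurableSet_uIoc]
    refine Filter.Eventually.of_forall fun t ht => ?_
    rw [Set.uIoc_of_le (by norm_num : (0:ℝ) ≤ 1)] at ht
    obtain ⟨ht0, ht1⟩ := ht
    have hnn : 0 ≤ Wfn t := Wfn_nonneg ⟨by linarith, ht1⟩
    rw [Real.norm_eq_abs, abs_of_nonneg hnn]
    rcases eq_or_lt_of_le ht1 with h | h
    · subst h; norm_num [Wfn]
    · exact Real.rpow_le_rpow_of_nonpos (by linarith) (by nlinarith) (by norm_num)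
  have hB : IntervalIntegrable Wfn volume (-1) 0 := by
    refine h2.mono_fun' m2 ?_
    rw [Filter.EventuallyLE, ae_restrict_iff' measurableSet_uIoc]
    refine Filter.Eventually.of_forall fun t ht => ?_
    rw [Set.uIoc_of_le (by norm_num : (-1:ℝ) ≤ 0)] at ht
    obtain ⟨ht0, ht1⟩ := ht
    have hnn : 0 ≤ Wfn t := Wfn_nonneg ⟨by linarith, by linarith⟩
    rw [Real.norm_eq_abs, abs_of_nonneg hnn]
    exact Real.rpow_le_rpow_of_nonpos (by linarith) (by nlinarith) (by norm_num)
  exact hB.trans hA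

theorem h_deriv_weighted_bound (q : ℝ → ℂ) (C : ℝ) (hq : ContDiff ℝ 2 q)
    (hq'' : ∀ t : ℝ, ‖deriv (deriv q) t‖ ≤ C * (1 + |t|)⁻¹) :
    ∃ C' : ℝ, ∀ μ : ℝ, 0 < μ →
      (1 + μ) * ‖deriv (fun ν : ℝ => (1 / 2 : ℝ) • ∫ lam in (-1:ℝ)..1,
          (((1 - lam ^ 2 : ℝ) ^ (-(1/2) : ℝ) * lam : ℝ)) • deriv q (lam * ν)) μ‖ ≤ C' := by
  set g := deriv (deriv q) with hg_def
  have hC : 0 ≤ C := by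
    have := hq'' 0
    simp only [abs_zero, add_zero, inv_one, mul_one] at this
    exact le_trans (norm_nonneg _) this
  -- regularity
  have h2 : ContDiff ℝ (1+1) q := by norm_num; exact hq
  have h1 : ContDiff ℝ 1 (deriv q) := ((contDiff_succ_iff_deriv).mp h2).2.2
  have h1' := (contDiff_succ_iff_deriv (n := 0)).mp (by norm_num; exact h1)
  have hdq_diff : Differentiable ℝ (deriv q) := h1'.1
  have hg_cont : Continuous g := h1'.2.2.continuous
  have hdq_cont : Continuous (deriv q) := h1.continuous
  have hd : ∀ s : ℝ, HasDerivAt (deriv q) (g s) s := fun s =>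
    (hdq_diff s).hasDerivAt
  set B : ℝ := ∫ t in (-1:ℝ)..1, Wfn t with hB_def
  have hB_nonneg : 0 ≤ B := by
    refine intervalIntegral.integral_nonneg (by norm_num) fun t ht => Wfn_nonneg ht
  refine ⟨C * B, fun μ hμ => ?_⟩
  -- set up F and F'
  set F : ℝ → ℝ → ℂ := fun ν lam => ((Wfn lam * lam : ℝ)) • deriv q (lam * ν) with hF_def
  set F' : ℝ → ℝ → ℂ := fun ν lam => ((Wfn lam * lam : ℝ)) • (lam • g (lam * ν)) with hF'_def
  have hmeasF : ∀ x : ℝ, AEStronglyMeasurable (F x) (volume.restrict (Set.uIoc (-1:ℝ) 1)) := by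
    intro x
    exact ((Wfn_meas.mul measurable_id).smul
      ((hdq_cont.measurable).comp (measurable_id.mul_const x))).aestronglyMeasurable
  have hmeasF' : AEStronglyMeasurable (F' μ) (volume.restrict (Set.uIoc (-1:ℝ) 1)) := by
    exact ((Wfn_meas.mul measurable_id).smul
      (measurable_id.smul ((hg_cont.measurable).comp
        (measurable_id.mul_const μ)))).aestronglyMeasurable
  -- integrability of F μ
  obtain ⟨M, hM⟩ := (isCompact_Icc (a := -|μ|) (b := |μ|)).exists_bound_of_continuousOn
    hdq_cont.continuousOn
  have hM0 : 0 ≤ M := le_trans (norm_nonneg _) (hM 0 (by simp [abs_nonneg]))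
  have hFint : IntervalIntegrable (F μ) volume (-1) 1 := by
    refine ((Wfn_int.const_mul M).mono_fun' (hmeasF μ) ?_)
    rw [Filter.EventuallyLE, ae_restrict_iff' measurableSet_uIoc]
    refine Filter.Eventually.of_forall fun t ht => ?_
    rw [Set.uIoc_of_le (by norm_num : (-1:ℝ) ≤ 1)] at ht
    have ht' : |t| ≤ 1 := abs_le.mpr ⟨ht.1.le, ht.2⟩
    have hnn : 0 ≤ Wfn t := Wfn_nonneg ⟨ht.1.le, ht.2⟩
    have hmem : t * μ ∈ Icc (-|μ|) |μ| := by
      constructor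
      · nlinarith [abs_nonneg μ, neg_abs_le (t*μ), abs_mul t μ, abs_le.mp ht']
      · calc t * μ ≤ |t * μ| := le_abs_self _
          _ = |t| * |μ| := abs_mul t μ
          _ ≤ 1 * |μ| := mul_le_mul_of_nonneg_right ht' (abs_nonneg μ)
          _ = |μ| := one_mul _
    have := hM (t * μ) hmem
    simp only [F, norm_smul, Real.norm_eq_abs, abs_mul, abs_of_nonneg hnn]
    calc Wfn t * |t| * ‖deriv q (t * μ)‖ ≤ Wfn t * 1 * M := by
          exact mul_le_mul (by nlinarith) this (norm_nonneg _) (by nlinarith)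
      _ = M * Wfn t := by ring
  -- derivative bound on ball
  have hbound : ∀ᵐ t ∂(volume : Measure ℝ), t ∈ Set.uIoc (-1:ℝ) 1 →
      ∀ x ∈ ball μ (μ/2), ‖F' x t‖ ≤ C * Wfn t := by
    refine Filter.Eventually.of_forall fun t ht x _ => ?_
    rw [Set.uIoc_of_le (by norm_num : (-1:ℝ) ≤ 1)] at ht
    have ht' : |t| ≤ 1 := abs_le.mpr ⟨ht.1.le, ht.2⟩
    have hnn : 0 ≤ Wfn t := Wfn_nonneg ⟨ht.1.le, ht.2⟩
    have hgb : ‖g (t * x)‖ ≤ C := by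
      refine le_trans (hq'' (t * x)) ?_
      have : (1 + |t * x|)⁻¹ ≤ 1 := by
        rw [inv_le_one_iff₀]; right; linarith [abs_nonneg (t*x)]
      nlinarith
    simp only [F', norm_smul, Real.norm_eq_abs, abs_mul, abs_of_nonneg hnn]
    calc Wfn t * |t| * (|t| * ‖g (t * x)‖) ≤ Wfn t * 1 * (1 * C) := by
          exact mul_le_mul (by nlinarith) (mul_le_mul ht' hgb (norm_nonneg _) zero_le_one)
            (by positivity) (by nlinarith)
      _ = C * Wfn t := by ring
  have hdiff : ∀ᵐ t ∂(volume : Measure ℝ), t ∈ Set.uIoc (-1:ℝ) 1 →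
      ∀ x ∈ ball μ (μ/2), HasDerivAt (fun x => F x t) (F' x t) x := by
    refine Filter.Eventually.of_forall fun t _ x _ => ?_
    have h0 : HasDerivAt (fun x : ℝ => t * x) t x := by
      simpa using (hasDerivAt_id x).const_mul t
    have h1 : HasDerivAt (fun x : ℝ => deriv q (t * x)) (t • g (t * x)) x :=
      (hd (t * x)).scomp x h0
    exact h1.const_smul (Wfn t * t)
  have key := intervalIntegral.hasDerivAt_integral_of_dominated_loc_of_deriv_le
    (F := F) (F' := F') (x₀ := μ) (a := -1) (b := 1) (bound := fun t => C * Wfn t)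
    (Metric.ball_mem_nhds μ (half_pos hμ)) (Filter.Eventually.of_forall hmeasF) hFint hmeasF'
    hbound (Wfn_int.const_mul C) hdiff
  have hDer : HasDerivAt (fun ν : ℝ => (1 / 2 : ℝ) • ∫ lam in (-1:ℝ)..1,
      (((1 - lam ^ 2 : ℝ) ^ (-(1/2) : ℝ) * lam : ℝ)) • deriv q (lam * ν))
      ((1/2 : ℝ) • ∫ t in (-1:ℝ)..1, F' μ t) μ := key.2.const_smul (1/2 : ℝ)
  rw [hDer.deriv]
  -- final estimate
  have hnorm : ‖∫ t in (-1:ℝ)..1, F' μ t‖ ≤ |∫ t in (-1:ℝ)..1, (C / (1 + μ)) * Wfn t| := by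
    refine le_trans (intervalIntegral.norm_integral_le_of_norm_le (by norm_num) ?_ (Wfn_int.const_mul _)) (le_abs_self _)
    rw [← Set.uIoc_of_le (by norm_num : (-1:ℝ) ≤ 1)]
    refine Filter.Eventually.of_forall fun t ht => ?_
    rw [Set.uIoc_of_le (by norm_num : (-1:ℝ) ≤ 1)] at ht
    have ht' : |t| ≤ 1 := abs_le.mpr ⟨ht.1.le, ht.2⟩
    have hnn : 0 ≤ Wfn t := Wfn_nonneg ⟨ht.1.le, ht.2⟩
    have habs : |t * μ| = |t| * μ := by rw [abs_mul, abs_of_pos hμ]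
    have hgb : ‖g (t * μ)‖ ≤ C * (1 + |t| * μ)⁻¹ := by
      have := hq'' (t * μ); rwa [habs] at this
    have hpos1 : (0:ℝ) < 1 + |t| * μ := by positivity
    have hpos2 : (0:ℝ) < 1 + μ := by linarith
    have hkey : |t| * (|t| * (C * (1 + |t| * μ)⁻¹)) ≤ C / (1 + μ) := by
      have h1 : |t| * |t| * (1 + μ) ≤ 1 + |t| * μ := by
        nlinarith [abs_nonneg t, mul_nonneg (abs_nonneg t) hμ.le]
      rw [show |t| * (|t| * (C * (1 + |t| * μ)⁻¹)) = (C * (|t| * |t|)) / (1 + |t| * μ) by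
            rw [div_eq_mul_inv]; ring,
        div_le_div_iff₀ hpos1 hpos2]
      nlinarith [mul_le_mul_of_nonneg_left h1 hC]
    simp only [F', norm_smul, Real.norm_eq_abs, abs_mul, abs_of_nonneg hnn]
    calc Wfn t * |t| * (|t| * ‖g (t * μ)‖)
        ≤ Wfn t * (|t| * (|t| * (C * (1 + |t| * μ)⁻¹))) := by
          rw [mul_assoc]
          apply mul_le_mul_of_nonneg_left _ hnn
          apply mul_le_mul_of_nonneg_left _ (abs_nonneg t)
          exact mul_le_mul_of_nonneg_left hgb (abs_nonneg t)
      _ ≤ Wfn t * (C / (1 + μ)) := mul_le_mul_of_nonneg_left hkey hnn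
      _ = (C / (1 + μ)) * Wfn t := by ring
  have hpos2 : (0:ℝ) < 1 + μ := by linarith
  have hBint : |∫ t in (-1:ℝ)..1, (C / (1 + μ)) * Wfn t| = (C / (1 + μ)) * B := by
    rw [abs_of_nonneg, hB_def, ← intervalIntegral.integral_const_mul]
    exact intervalIntegral.integral_nonneg (by norm_num) fun t ht =>
      mul_nonneg (div_nonneg hC hpos2.le) (Wfn_nonneg ht)
  rw [norm_smul]
  have : ‖(1/2 : ℝ)‖ = (1/2 : ℝ) := by norm_num
  rw [this]
  calc (1 + μ) * (1/2 * ‖∫ t in (-1:ℝ)..1, F' μ t‖)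
      ≤ (1 + μ) * (1/2 * ((C / (1 + μ)) * B)) := by
        rw [hBint] at hnorm
        apply mul_le_mul_of_nonneg_left _ hpos2.le
        linarith
    _ = (1/2) * (C * B) := by field_simp
    _ ≤ C * B := by nlinarith [mul_nonneg hC hB_nonneg]
end

section
/- Let ν : ℝ → ℂ be a Schwartz function and h : ℝ → ℂ a bounded measurable function such that h is continuously differentiable with (1+|μ|)·|h'(μ)| ≤ C for all μ. Then the convolution F = ν * h is continuously differentiable and there are constants C₀, C₁ with |F(y)| ≤ C₀ and |F'(y)| ≤ C₁ (1+|y|)^{-1} for all y ∈ ℝ. -/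
open Real MeasureTheory

theorem convolution_schwartz_symbol (ν : SchwartzMap ℝ ℂ) (h : ℝ → ℂ) (C : ℝ)
    (hmeas : Measurable h) (hbdd : ∃ M : ℝ, ∀ μ : ℝ, ‖h μ‖ ≤ M)
    (hC1 : ContDiff ℝ 1 h) (hh' : ∀ μ : ℝ, (1 + |μ|) * ‖deriv h μ‖ ≤ C) :
    ContDiff ℝ 1 (fun y : ℝ => ∫ t : ℝ, ν t * h (y - t)) ∧
    ∃ C₀ C₁ : ℝ, ∀ y : ℝ,
      ‖∫ t : ℝ, ν t * h (y - t)‖ ≤ C₀ ∧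
      ‖deriv (fun y : ℝ => ∫ t : ℝ, ν t * h (y - t)) y‖ ≤ C₁ * (1 + |y|)⁻¹ := by
  obtain ⟨M, hM⟩ := hbdd
  have hdh : Differentiable ℝ h := hC1.differentiable one_ne_zero
  have hdhc : Continuous (deriv h) := hC1.continuous_deriv le_rfl
  have hC : ∀ μ : ℝ, ‖deriv h μ‖ ≤ C := fun μ => by
    have := hh' μ
    nlinarith [norm_nonneg (deriv h μ), abs_nonneg μ]
  have hνint : Integrable (fun t : ℝ => ν t) volume := ν.integrable
  have hνnorm : Integrable (fun t : ℝ => ‖ν t‖) volume := hνint.norm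
  have hwν : Integrable (fun t : ℝ => (1 + |t|) * ‖ν t‖) volume := by
    have h1 : Integrable (fun t : ℝ => ‖t‖ * ‖ν t‖) volume := by
      simpa using ν.integrable_pow_mul volume 1
    have := hνnorm.add h1
    exact this.congr (Filter.Eventually.of_forall fun t => by simp [Pi.add_apply, add_mul, one_mul, Real.norm_eq_abs])
  have hint : ∀ y : ℝ, Integrable (fun t : ℝ => ν t * h (y - t)) volume := by
    intro y
    have hms : AEStronglyMeasurable (fun t : ℝ => ν t * h (y - t)) volume :=
      (ν.continuous.measurable.mul
        (hmeas.comp (measurable_const.sub measurable_id))).aestronglyMeasurable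
    refine (hνnorm.const_mul M).mono' hms ?_
    filter_upwards with t
    calc ‖ν t * h (y - t)‖ = ‖ν t‖ * ‖h (y - t)‖ := norm_mul _ _
      _ ≤ ‖ν t‖ * M := by gcongr; exact hM _
      _ = M * ‖ν t‖ := mul_comm _ _
  have hint' : ∀ y : ℝ, Integrable (fun t : ℝ => ν t * deriv h (y - t)) volume := by
    intro y
    have hms : AEStronglyMeasurable (fun t : ℝ => ν t * deriv h (y - t)) volume :=
      (ν.continuous.mul (hdhc.comp (continuous_const.sub continuous_id))).aestronglyMeasurable
    refine (hνnorm.const_mul C).mono' hms ?_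
    filter_upwards with t
    calc ‖ν t * deriv h (y - t)‖ = ‖ν t‖ * ‖deriv h (y - t)‖ := norm_mul _ _
      _ ≤ ‖ν t‖ * C := by gcongr; exact hC _
      _ = C * ‖ν t‖ := mul_comm _ _
  set G : ℝ → ℂ := fun y => ∫ t : ℝ, ν t * deriv h (y - t) with hG
  have hFderiv : ∀ y : ℝ, HasDerivAt (fun y : ℝ => ∫ t : ℝ, ν t * h (y - t)) (G y) y := by
    intro y
    have key := hasDerivAt_integral_of_dominated_loc_of_deriv_le
      (F := fun (x : ℝ) (t : ℝ) => ν t * h (x - t))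
      (F' := fun (x : ℝ) (t : ℝ) => ν t * deriv h (x - t)) (x₀ := y)
      (bound := fun t => C * ‖ν t‖) (Metric.ball_mem_nhds y zero_lt_one) ?_ (hint y) ?_ ?_ (hνnorm.const_mul C) ?_
    · exact key.2
    · filter_upwards with x
      exact (hint x).aestronglyMeasurable
    · exact (hint' y).aestronglyMeasurable
    · filter_upwards with t
      intro x hx
      calc ‖ν t * deriv h (x - t)‖ = ‖ν t‖ * ‖deriv h (x - t)‖ := norm_mul _ _
        _ ≤ ‖ν t‖ * C := by gcongr; exact hC _
        _ = C * ‖ν t‖ := mul_comm _ _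
    · filter_upwards with t
      intro x hx
      have h1 : HasDerivAt (fun x : ℝ => h (x - t)) (deriv h (x - t)) x :=
        HasDerivAt.comp_sub_const x t (hdh (x - t)).hasDerivAt
      simpa using h1.const_mul (ν t : ℂ)
  have hderiv_eq : deriv (fun y : ℝ => ∫ t : ℝ, ν t * h (y - t)) = G :=
    funext fun y => (hFderiv y).deriv
  have hGcont : Continuous G := by
    apply continuous_of_dominated (bound := fun t => C * ‖ν t‖)
    · intro x; exact (hint' x).aestronglyMeasurable
    · intro x
      filter_upwards with t
      calc ‖ν t * deriv h (x - t)‖ = ‖ν t‖ * ‖deriv h (x - t)‖ := norm_mul _ _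
        _ ≤ ‖ν t‖ * C := by gcongr; exact hC _
        _ = C * ‖ν t‖ := mul_comm _ _
    · exact hνnorm.const_mul C
    · filter_upwards with t
      exact continuous_const.mul (hdhc.comp (continuous_id.sub continuous_const))
  constructor
  · rw [contDiff_one_iff_deriv]
    exact ⟨fun y => (hFderiv y).differentiableAt, hderiv_eq ▸ hGcont⟩
  · refine ⟨M * ∫ t : ℝ, ‖ν t‖, C * ∫ t : ℝ, (1 + |t|) * ‖ν t‖, fun y => ⟨?_, ?_⟩⟩
    · calc ‖∫ t : ℝ, ν t * h (y - t)‖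
          ≤ ∫ t : ℝ, ‖ν t * h (y - t)‖ := norm_integral_le_integral_norm _
        _ ≤ ∫ t : ℝ, M * ‖ν t‖ := by
            apply integral_mono (hint y).norm (hνnorm.const_mul M)
            intro t
            calc ‖ν t * h (y - t)‖ = ‖ν t‖ * ‖h (y - t)‖ := norm_mul _ _
              _ ≤ ‖ν t‖ * M := by gcongr; exact hM _
              _ = M * ‖ν t‖ := mul_comm _ _
        _ = M * ∫ t : ℝ, ‖ν t‖ := integral_const_mul _ _
    · rw [hderiv_eq]
      have hy1 : (0:ℝ) < 1 + |y| := by positivity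
      have keypt : ∀ t : ℝ, ‖ν t * deriv h (y - t)‖ ≤ C * ((1 + |t|) * ‖ν t‖) * (1 + |y|)⁻¹ := by
        intro t
        have hyt : (0:ℝ) < 1 + |y - t| := by positivity
        have habs : |y| ≤ |t| + |y - t| := by
          simpa using abs_add_le t (y - t)
        have hle : 1 + |y| ≤ (1 + |t|) * (1 + |y - t|) := by
          nlinarith [abs_nonneg t, abs_nonneg (y - t)]
        have hdb : ‖deriv h (y - t)‖ * (1 + |y|) ≤ C * (1 + |t|) := by
          calc ‖deriv h (y - t)‖ * (1 + |y|)
              ≤ ‖deriv h (y - t)‖ * ((1 + |t|) * (1 + |y - t|)) := by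
                exact mul_le_mul_of_nonneg_left hle (norm_nonneg _)
            _ = ((1 + |y - t|) * ‖deriv h (y - t)‖) * (1 + |t|) := by ring
            _ ≤ C * (1 + |t|) := by
                have := hh' (y - t)
                nlinarith [abs_nonneg t]
        have hd : ‖deriv h (y - t)‖ ≤ C * (1 + |t|) * (1 + |y|)⁻¹ := by
          rw [← le_div_iff₀ hy1] at hdb
          simpa [div_eq_mul_inv] using hdb
        calc ‖ν t * deriv h (y - t)‖ = ‖ν t‖ * ‖deriv h (y - t)‖ := norm_mul _ _
          _ ≤ ‖ν t‖ * (C * (1 + |t|) * (1 + |y|)⁻¹) := by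
              exact mul_le_mul_of_nonneg_left hd (norm_nonneg _)
          _ = C * ((1 + |t|) * ‖ν t‖) * (1 + |y|)⁻¹ := by ring
      calc ‖G y‖ ≤ ∫ t : ℝ, ‖ν t * deriv h (y - t)‖ := norm_integral_le_integral_norm _
        _ ≤ ∫ t : ℝ, C * ((1 + |t|) * ‖ν t‖) * (1 + |y|)⁻¹ := by
            apply integral_mono (hint' y).norm (((hwν.const_mul C).mul_const _))
            exact keypt
        _ = (∫ t : ℝ, C * ((1 + |t|) * ‖ν t‖)) * (1 + |y|)⁻¹ := integral_mul_const _ _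
        _ = C * (∫ t : ℝ, (1 + |t|) * ‖ν t‖) * (1 + |y|)⁻¹ := by rw [integral_const_mul]
end
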